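/- Assume the feasible set {x ∈ ℝⁿ : ‖Ax − b‖ ≤ δ} is nonempty, and let r = min { ‖x‖₀ : ‖Ax − b‖ ≤ δ } > 0 and α > 0 be such that |x|ᵣ↓ > α for all feasible x. Then for every ρ > 1/α, every globally optimal solution (x̄, v̄) of the MPEC problem min { ⟨e, e − v⟩ : ‖Ax − b‖ ≤ δ, ⟨v, |x|⟩ = 0, 0 ≤ v ≤ e } is a globally optimal solution of the penalty problem min { ⟨e, e − v⟩ + ρ⟨v, |x|⟩ : ‖Ax − b‖ ≤ δ, 0 ≤ v ≤ e }. -/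

import Mathlib

/-- The Euclidean norm of a vector in `ℝᵐ`. -/
noncomputable def euclNorm {m : ℕ} (u : Fin m → ℝ) : ℝ := Real.sqrt (∑ i, u i ^ 2)

/-- The zero-norm (number of nonzero components) of `x ∈ ℝⁿ`. -/
noncomputable def zeroNorm {n : ℕ} (x : Fin n → ℝ) : ℕ :=
  (Finset.univ.filter fun i => x i ≠ 0).card

/-- let `r = min { ‖x‖₀ : ‖Ax − b‖ ≤ δ } > 0` and `α > 0` be such that the
`r`-th largest component of `|x|` exceeds `α` for all feasible `x` (i.e. every feasible `x`
has at least `r` components with `|xᵢ| > α`). Then for every `ρ > 1/α`, every globally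
optimal solution `(x̄, v̄)` of the MPEC problem is globally optimal for the penalty
problem. -/
theorem mpec_global_opt_is_penalty_global_opt {m n : ℕ} (A : Matrix (Fin m) (Fin n) ℝ)
    (b : Fin m → ℝ) (δ : ℝ) (hδ : 0 ≤ δ)
    (hne : ∃ x : Fin n → ℝ, euclNorm (A.mulVec x - b) ≤ δ)
    (r : ℕ) (hrpos : 0 < r)
    (hr : IsLeast {k : ℕ | ∃ x : Fin n → ℝ, euclNorm (A.mulVec x - b) ≤ δ ∧ zeroNorm x = k} r)
    (α : ℝ) (hα : 0 < α)
    (hαr : ∀ x : Fin n → ℝ, euclNorm (A.mulVec x - b) ≤ δ →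
      r ≤ (Finset.univ.filter fun i => α < |x i|).card)
    (ρ : ℝ) (hρ : 1 / α < ρ) :
    ∀ xb vb : Fin n → ℝ,
      -- (x̄, v̄) is feasible for the MPEC problem
      euclNorm (A.mulVec xb - b) ≤ δ → (∑ i, vb i * |xb i|) = 0 → (∀ i, 0 ≤ vb i ∧ vb i ≤ 1) →
      -- (x̄, v̄) is globally optimal for the MPEC problem
      (∀ x v : Fin n → ℝ, euclNorm (A.mulVec x - b) ≤ δ → (∑ i, v i * |x i|) = 0 →
        (∀ i, 0 ≤ v i ∧ v i ≤ 1) → (∑ i, (1 - vb i)) ≤ ∑ i, (1 - v i)) →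
      -- (x̄, v̄) is globally optimal for the penalty problem
      (∀ x v : Fin n → ℝ, euclNorm (A.mulVec x - b) ≤ δ → (∀ i, 0 ≤ v i ∧ v i ≤ 1) →
        (∑ i, (1 - vb i)) + ρ * ∑ i, vb i * |xb i| ≤
          (∑ i, (1 - v i)) + ρ * ∑ i, v i * |x i|) := by

  intro xb vb hxb hvbx hvb hopt x v hx hv
  have hρpos : 0 < ρ := lt_trans (div_pos one_pos hα) hρ
  have hρα : 1 < ρ * α := by
    rw [div_lt_iff₀ hα] at hρ; linarith
  obtain ⟨⟨x0, hx0, hx0r⟩, hlb⟩ := hr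
  -- Step 1: the MPEC optimal value is at most r
  have h1 : (∑ i, (1 - vb i)) ≤ (r : ℝ) := by
    have hfeas : (∑ i, (fun i => if x0 i = 0 then (1:ℝ) else 0) i * |x0 i|) = 0 := by
      apply Finset.sum_eq_zero
      intro i _
      by_cases h : x0 i = 0 <;> simp [h]
    have hbnd : ∀ i, 0 ≤ (fun i => if x0 i = 0 then (1:ℝ) else 0) i ∧
        (fun i => if x0 i = 0 then (1:ℝ) else 0) i ≤ 1 := by
      intro i; by_cases h : x0 i = 0 <;> simp [h]
    have h := hopt x0 _ hx0 hfeas hbnd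
    have hsum : (∑ i, (1 - (fun i => if x0 i = 0 then (1:ℝ) else 0) i)) = (r : ℝ) := by
      have : ∀ i : Fin n, (1 - (if x0 i = 0 then (1:ℝ) else 0)) =
          (if x0 i ≠ 0 then (1:ℝ) else 0) := by
        intro i; by_cases h : x0 i = 0 <;> simp [h]
      rw [Finset.sum_congr rfl (fun i _ => this i), Finset.sum_boole, ← hx0r]
      unfold zeroNorm
      norm_num
    rw [hsum] at h
    exact h
  -- Step 2: the penalty objective is at least r for any feasible point
  have h2 : (r : ℝ) ≤ (∑ i, (1 - v i)) + ρ * ∑ i, v i * |x i| := by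
    have hS := hαr x hx
    set S := Finset.univ.filter fun i => α < |x i| with hSdef
    have key : ∀ i ∈ S, (1:ℝ) ≤ (1 - v i) + ρ * (v i * |x i|) := by
      intro i hi
      rw [hSdef, Finset.mem_filter] at hi
      have hvi := (hv i).1
      nlinarith [mul_nonneg hvi (le_of_lt (sub_pos.mpr hi.2)),
        mul_nonneg hvi (le_of_lt (sub_pos.mpr hρα)), hρpos.le]
    calc (r : ℝ) ≤ (S.card : ℝ) := by exact_mod_cast hS
      _ = ∑ _i ∈ S, (1:ℝ) := by simp
      _ ≤ ∑ i ∈ S, ((1 - v i) + ρ * (v i * |x i|)) := Finset.sum_le_sum key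
      _ ≤ ∑ i, ((1 - v i) + ρ * (v i * |x i|)) := by
          apply Finset.sum_le_sum_of_subset_of_nonneg (Finset.subset_univ S)
          intro i _ _
          have := hv i
          have : 0 ≤ ρ * (v i * |x i|) :=
            mul_nonneg hρpos.le (mul_nonneg (hv i).1 (abs_nonneg _))
          nlinarith [(hv i).2]
      _ = (∑ i, (1 - v i)) + ρ * ∑ i, v i * |x i| := by
          rw [Finset.sum_add_distrib, Finset.mul_sum]
  rw [hvbx]
  simp only [mul_zero, add_zero]
  linarith
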